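/- Dominant eigenvalue of the power under the power-Doeblin condition: Let n be a nonempty finite index type, A an n×n real matrix with nonnegative entries, and N ≥ 1 a natural number. Suppose A^N satisfies the discrete Doeblin minorization: there exist α > 0 and vectors u, g : n → ℝ with u i > 0 and g j > 0 for all i, j, such that (A^N) i j ≥ α · u i · g j for all i, j. Then there exist r > 0 and a vector w : n → ℝ with w i > 0 for all i such that: (1) (A^N) *ᵥ w = r^N • w; (2) every eigenvalue μ of A (element of the spectrum of the complexified matrix Aℂ) satisfies ‖μ‖ ≤ r, so r^N = ρ(A)^N is the dominant eigenvalue of A^N; and (3) the eigenspace of A^N at r^N is one-dimensional: every v : n → ℂ with (Aℂ)^N *ᵥ v = r^N • v is a complex scalar multiple of the complexification of w. -/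

import Mathlib

open scoped Matrix
open Finset

section Perron

variable {n : Type*} [Fintype n] [DecidableEq n] [Nonempty n]

private lemma pd_mulVec_pos {B : Matrix n n ℝ} (hB : ∀ i j, 0 < B i j)
    {y : n → ℝ} (hy : ∀ i, 0 ≤ y i) (hy0 : y ≠ 0) (i : n) : 0 < (B *ᵥ y) i := by
  obtain ⟨j, hj⟩ : ∃ j, 0 < y j := by
    by_contra h
    push_neg at h
    exact hy0 (funext fun j => le_antisymm (h j) (hy j))
  have h1 : 0 < B i j * y j := mul_pos (hB i j) hj
  have h2 : B i j * y j ≤ ∑ k, B i k * y k :=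
    Finset.single_le_sum (fun k _ => mul_nonneg (hB i k).le (hy k)) (mem_univ j)
  have h3 : (B *ᵥ y) i = ∑ k, B i k * y k := by
    simp [Matrix.mulVec, dotProduct]
  linarith

private theorem pd_perron (B : Matrix n n ℝ) (hB : ∀ i j, 0 < B i j) :
    ∃ ρ : ℝ, 0 < ρ ∧ ∃ w : n → ℝ, (∀ i, 0 < w i) ∧ B *ᵥ w = ρ • w ∧
      (∀ (t : ℝ) (y : n → ℝ), (∀ i, 0 ≤ y i) → y ≠ 0 →
        (∀ i, t * y i ≤ (B *ᵥ y) i) → t ≤ ρ) ∧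
      (∀ v : n → ℂ, (B.map (Complex.ofReal ·)) *ᵥ v = (ρ : ℂ) • v →
        (∃ k, v k = 0) → v = 0) := by
  classical
  set S : Set (ℝ × (n → ℝ)) :=
    {p | p.2 ∈ stdSimplex ℝ n ∧ 0 ≤ p.1 ∧ ∀ i, p.1 * p.2 i ≤ (B *ᵥ p.2) i} with hSdef
  have hSclosed : IsClosed S := by
    have h1 : IsClosed {p : ℝ × (n → ℝ) | p.2 ∈ stdSimplex ℝ n} :=
      (isClosed_stdSimplex ℝ n).preimage continuous_snd
    have h2 : IsClosed {p : ℝ × (n → ℝ) | 0 ≤ p.1} :=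
      isClosed_le continuous_const continuous_fst
    have h3 : ∀ i : n, IsClosed {p : ℝ × (n → ℝ) | p.1 * p.2 i ≤ (B *ᵥ p.2) i} := by
      intro i
      have hc : Continuous fun p : ℝ × (n → ℝ) => (B *ᵥ p.2) i := by
        have : Continuous fun p : ℝ × (n → ℝ) => ∑ j, B i j * p.2 j :=
          continuous_finset_sum _ fun j _ =>
            continuous_const.mul ((continuous_apply j).comp continuous_snd)
        simpa [Matrix.mulVec, dotProduct] using this
      exact isClosed_le (continuous_fst.mul ((continuous_apply i).comp continuous_snd)) hc
    have : S = {p : ℝ × (n → ℝ) | p.2 ∈ stdSimplex ℝ n} ∩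
        ({p : ℝ × (n → ℝ) | 0 ≤ p.1} ∩ ⋂ i, {p : ℝ × (n → ℝ) | p.1 * p.2 i ≤ (B *ᵥ p.2) i}) := by
      ext p
      simp [hSdef, Set.mem_iInter, and_assoc]
    rw [this]
    exact h1.inter (h2.inter (isClosed_iInter h3))
  set C : ℝ := ∑ i, ∑ j, B i j with hC
  have hSsub : S ⊆ Set.Icc (0:ℝ) C ×ˢ stdSimplex ℝ n := by
    rintro ⟨t, x⟩ ⟨hx, ht, hineq⟩
    refine ⟨⟨ht, ?_⟩, hx⟩
    have hx1 : ∀ j, x j ≤ 1 := by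
      intro j
      have := hx.2
      calc x j ≤ ∑ k, x k :=
            Finset.single_le_sum (fun k _ => hx.1 k) (mem_univ j)
        _ = 1 := hx.2
    have h1 : t = ∑ i, t * x i := by
      rw [← Finset.mul_sum, hx.2, mul_one]
    have h2 : ∑ i, t * x i ≤ ∑ i, (B *ᵥ x) i :=
      Finset.sum_le_sum fun i _ => hineq i
    have h3 : ∑ i, (B *ᵥ x) i ≤ C := by
      rw [hC]
      refine Finset.sum_le_sum fun i _ => ?_
      have : (B *ᵥ x) i = ∑ j, B i j * x j := by
        simp [Matrix.mulVec, dotProduct]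
      rw [this]
      refine Finset.sum_le_sum fun j _ => ?_
      calc B i j * x j ≤ B i j * 1 :=
            mul_le_mul_of_nonneg_left (hx1 j) (hB i j).le
        _ = B i j := mul_one _
    linarith
  have hScompact : IsCompact S :=
    ((isCompact_Icc).prod (isCompact_stdSimplex ℝ n)).of_isClosed_subset hSclosed hSsub
  have hcard : (0:ℝ) < (Fintype.card n : ℝ) := by
    exact_mod_cast Fintype.card_pos
  set x₀ : n → ℝ := fun _ => (Fintype.card n : ℝ)⁻¹ with hx₀
  have hx₀mem : x₀ ∈ stdSimplex ℝ n := by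
    constructor
    · intro i; positivity
    · simp [hx₀, Finset.sum_const, Finset.card_univ]
  have hSne : S.Nonempty := by
    refine ⟨(0, x₀), hx₀mem, le_refl 0, fun i => ?_⟩
    rw [zero_mul]
    exact (pd_mulVec_pos hB (fun i => (hx₀mem.1 i)) (by
      intro h
      have := congrFun h (Classical.arbitrary n)
      simp [hx₀] at this) i).le
  obtain ⟨p, hp, hmax⟩ := hScompact.exists_isMaxOn hSne continuous_fst.continuousOn
  obtain ⟨hpx, hpt, hpineq⟩ := hp
  -- Collatz–Wielandt upper bound
  have hCW : ∀ (t : ℝ) (y : n → ℝ), (∀ i, 0 ≤ y i) → y ≠ 0 →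
      (∀ i, t * y i ≤ (B *ᵥ y) i) → t ≤ p.1 := by
    intro t y hy hy0 hty
    rcases le_or_gt t 0 with ht | ht
    · exact ht.trans hpt
    · obtain ⟨j, hj⟩ : ∃ j, 0 < y j := by
        by_contra h
        push_neg at h
        exact hy0 (funext fun j => le_antisymm (h j) (hy j))
      have hs0 : 0 < ∑ i, y i :=
        Finset.sum_pos' (fun i _ => hy i) ⟨j, mem_univ j, hj⟩
      set s : ℝ := (∑ i, y i)⁻¹ with hs
      have hsp : 0 < s := inv_pos.2 hs0
      have hmem : (t, s • y) ∈ S := by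
        refine ⟨⟨fun i => mul_nonneg hsp.le (hy i), ?_⟩, ht.le, fun i => ?_⟩
        · simp only [Pi.smul_apply, smul_eq_mul, ← Finset.mul_sum, hs]
          field_simp
        · have h1 : (B *ᵥ (s • y)) i = s * (B *ᵥ y) i := by
            rw [Matrix.mulVec_smul]
            rfl
          have h2 : t * (s • y) i = s * (t * y i) := by
            simp [smul_eq_mul]; ring
          rw [h1, h2]
          exact mul_le_mul_of_nonneg_left (hty i) hsp.le
      exact hmax hmem
  -- maximality forces equality
  have hmaxeq : ∀ y : n → ℝ, (∀ i, 0 ≤ y i) → y ≠ 0 →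
      (∀ i, p.1 * y i ≤ (B *ᵥ y) i) → B *ᵥ y = p.1 • y := by
    intro y hy hy0 hle
    by_contra hne
    set z : n → ℝ := B *ᵥ y - p.1 • y with hzdef
    have hz : ∀ i, 0 ≤ z i := fun i => by
      simp only [hzdef, Pi.sub_apply, Pi.smul_apply, smul_eq_mul, sub_nonneg]
      exact hle i
    have hz0 : z ≠ 0 := by
      intro h
      exact hne (by rw [← sub_eq_zero]; exact h)
    set b : n → ℝ := B *ᵥ y with hbdef
    have hb : ∀ i, 0 < b i := pd_mulVec_pos hB hy hy0
    have hBz : ∀ i, 0 < (B *ᵥ z) i := pd_mulVec_pos hB hz hz0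
    have hBb : ∀ i, (B *ᵥ b) i = p.1 * b i + (B *ᵥ z) i := by
      intro i
      have hb2 : b = p.1 • y + z := by
        rw [hzdef]; abel
      have : B *ᵥ b = p.1 • (B *ᵥ y) + B *ᵥ z := by
        rw [hb2, Matrix.mulVec_add, Matrix.mulVec_smul]
      rw [this]
      simp [hbdef, smul_eq_mul]
    set ε : ℝ := univ.inf' univ_nonempty (fun i => (B *ᵥ z) i / b i) with hε
    have hεpos : 0 < ε :=
      (Finset.lt_inf'_iff _).2 fun i _ => div_pos (hBz i) (hb i)
    have key : ∀ i, (p.1 + ε) * b i ≤ (B *ᵥ b) i := by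
      intro i
      have h1 : ε ≤ (B *ᵥ z) i / b i := Finset.inf'_le _ (mem_univ i)
      have h2 : ε * b i ≤ (B *ᵥ z) i := (le_div_iff₀ (hb i)).1 h1
      rw [hBb i]
      nlinarith
    have := hCW (p.1 + ε) b (fun i => (hb i).le)
      (fun h => (hb (Classical.arbitrary n)).ne' (by rw [h]; rfl)) key
    linarith
  have hx0 : p.2 ≠ 0 := by
    intro h
    have := hpx.2
    rw [h] at this
    simp at this
  have heig : B *ᵥ p.2 = p.1 • p.2 := hmaxeq p.2 hpx.1 hx0 hpineq
  have hρpos : 0 < p.1 := by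
    obtain ⟨j, hj⟩ : ∃ j, 0 < p.2 j := by
      by_contra h
      push_neg at h
      exact hx0 (funext fun j => le_antisymm (h j) (hpx.1 j))
    have h1 : 0 < (B *ᵥ p.2) j := pd_mulVec_pos hB hpx.1 hx0 j
    rw [heig] at h1
    simp only [Pi.smul_apply, smul_eq_mul] at h1
    nlinarith
  have hwpos : ∀ i, 0 < p.2 i := by
    intro i
    have h1 : 0 < (B *ᵥ p.2) i := pd_mulVec_pos hB hpx.1 hx0 i
    rw [heig] at h1
    simp only [Pi.smul_apply, smul_eq_mul] at h1
    nlinarith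
  refine ⟨p.1, hρpos, p.2, hwpos, heig, hCW, ?_⟩
  intro v hv hk
  by_contra hv0
  set a : n → ℝ := fun i => ‖v i‖ with ha
  have ha0 : ∀ i, 0 ≤ a i := fun i => norm_nonneg _
  have hane : a ≠ 0 := by
    intro h
    apply hv0
    funext i
    have := congrFun h i
    simpa [ha] using this
  have hle : ∀ i, p.1 * a i ≤ (B *ᵥ a) i := by
    intro i
    have h1 : ((B.map (Complex.ofReal ·)) *ᵥ v) i = (p.1 : ℂ) * v i := by
      rw [hv]; rfl
    have h2 : ((B.map (Complex.ofReal ·)) *ᵥ v) i = ∑ j, (B i j : ℂ) * v j := by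
      simp [Matrix.mulVec, dotProduct, Matrix.map_apply]
    have h3 : p.1 * a i = ‖∑ j, (B i j : ℂ) * v j‖ := by
      rw [← h2, h1]
      simp [ha, norm_mul, Complex.norm_real, abs_of_pos hρpos]
    rw [h3]
    calc ‖∑ j, (B i j : ℂ) * v j‖ ≤ ∑ j, ‖(B i j : ℂ) * v j‖ := norm_sum_le _ _
      _ = ∑ j, B i j * a j := by
          refine Finset.sum_congr rfl fun j _ => ?_
          simp [ha, norm_mul, Complex.norm_real, abs_of_pos (hB i j)]
      _ = (B *ᵥ a) i := by simp [Matrix.mulVec, dotProduct]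
  have heq := hmaxeq a ha0 hane hle
  obtain ⟨k, hk⟩ := hk
  have h1 : 0 < (B *ᵥ a) k := pd_mulVec_pos hB ha0 hane k
  rw [heq] at h1
  simp only [Pi.smul_apply, smul_eq_mul] at h1
  have : a k = 0 := by simp [ha, hk]
  rw [this, mul_zero] at h1
  exact lt_irrefl 0 h1

end Perron

theorem power_doeblin_dominant_eigenvalue_of_power
    {n : Type*} [Fintype n] [DecidableEq n] [Nonempty n]
    (A : Matrix n n ℝ) (hA : ∀ i j, 0 ≤ A i j)
    (N : ℕ) (hN : 1 ≤ N)
    (α : ℝ) (hα : 0 < α) (u g : n → ℝ)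
    (hu : ∀ i, 0 < u i) (hg : ∀ j, 0 < g j)
    (hmin : ∀ i j, α * u i * g j ≤ (A ^ N) i j) :
    ∃ r : ℝ, 0 < r ∧ ∃ w : n → ℝ, (∀ i, 0 < w i) ∧
      (A ^ N) *ᵥ w = (r ^ N) • w ∧
      (∀ μ ∈ spectrum ℂ (A.map (Complex.ofReal ·)), ‖μ‖ ≤ r) ∧
      (∀ v : n → ℂ, ((A.map (Complex.ofReal ·)) ^ N) *ᵥ v = ((r : ℂ) ^ N) • v →
        ∃ c : ℂ, v = c • fun i => (w i : ℂ)) := by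
  classical
  set B : Matrix n n ℝ := A ^ N with hBdef
  have hB : ∀ i j, 0 < B i j := fun i j =>
    lt_of_lt_of_le (mul_pos (mul_pos hα (hu i)) (hg j)) (hmin i j)
  obtain ⟨ρ, hρ, w, hw, heig, hCW, huniq⟩ := pd_perron B hB
  have hN0 : (N : ℝ) ≠ 0 := by exact_mod_cast Nat.one_le_iff_ne_zero.1 hN
  set r : ℝ := ρ ^ ((N : ℝ)⁻¹) with hr
  have hrpos : 0 < r := Real.rpow_pos_of_pos hρ _
  have hrN : r ^ N = ρ := by
    rw [hr, ← Real.rpow_natCast (ρ ^ ((N : ℝ)⁻¹)) N, ← Real.rpow_mul hρ.le,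
      inv_mul_cancel₀ hN0, Real.rpow_one]
  set Aℂ : Matrix n n ℂ := A.map (Complex.ofReal ·) with hAc
  have hmap : Aℂ ^ N = B.map (Complex.ofReal ·) := by
    have : Aℂ = (Complex.ofRealHom.mapMatrix : Matrix n n ℝ →+* Matrix n n ℂ) A := rfl
    rw [this, ← map_pow]
    rfl
  refine ⟨r, hrpos, w, hw, by rw [hrN]; exact heig, ?_, ?_⟩
  · -- part 2: spectral bound
    intro μ hμ
    have hμ' : μ ∈ spectrum ℂ (Matrix.toLinAlgEquiv' Aℂ) := by
      rwa [AlgEquiv.spectrum_eq]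
    have heigv : Module.End.HasEigenvalue (Matrix.toLinAlgEquiv' Aℂ) μ :=
      Module.End.hasEigenvalue_iff_mem_spectrum.2 hμ'
    obtain ⟨v, hv⟩ := heigv.exists_hasEigenvector
    have hvA : Aℂ *ᵥ v = μ • v := by
      have := hv.apply_eq_smul
      simpa [Matrix.toLinAlgEquiv'_apply, Matrix.toLin'_apply] using this
    have hpow : ∀ k : ℕ, (Aℂ ^ k) *ᵥ v = μ ^ k • v := by
      intro k
      induction k with
      | zero => simp
      | succ k ih =>
        have h1 : Aℂ ^ (k + 1) = Aℂ ^ k * Aℂ := pow_succ _ _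
        rw [h1, ← Matrix.mulVec_mulVec, hvA, Matrix.mulVec_smul, ih,
          smul_smul, pow_succ]
        ring_nf
    set a : n → ℝ := fun i => ‖v i‖ with ha
    have ha0 : ∀ i, 0 ≤ a i := fun i => norm_nonneg _
    have hane : a ≠ 0 := by
      intro h
      apply hv.2
      funext i
      have := congrFun h i
      simpa [ha] using this
    have hbound : ∀ i, ‖μ‖ ^ N * a i ≤ (B *ᵥ a) i := by
      intro i
      have h1 : ((B.map (Complex.ofReal ·)) *ᵥ v) i = μ ^ N * v i := by
        rw [← hmap, hpow N]; rfl
      have h2 : ((B.map (Complex.ofReal ·)) *ᵥ v) i = ∑ j, (B i j : ℂ) * v j := by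
        simp [Matrix.mulVec, dotProduct, Matrix.map_apply]
      have h3 : ‖μ‖ ^ N * a i = ‖∑ j, (B i j : ℂ) * v j‖ := by
        rw [← h2, h1]
        simp [ha, norm_mul, norm_pow]
      rw [h3]
      calc ‖∑ j, (B i j : ℂ) * v j‖ ≤ ∑ j, ‖(B i j : ℂ) * v j‖ := norm_sum_le _ _
        _ = ∑ j, B i j * a j := by
            refine Finset.sum_congr rfl fun j _ => ?_
            simp [ha, norm_mul, Complex.norm_real, abs_of_pos (hB i j)]
        _ = (B *ᵥ a) i := by simp [Matrix.mulVec, dotProduct]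
    have hbnd := hCW (‖μ‖ ^ N) a ha0 hane hbound
    exact le_of_pow_le_pow_left₀ (Nat.one_le_iff_ne_zero.1 hN) hrpos.le (by rwa [hrN])
  · -- part 3: uniqueness
    intro v hv
    have hv' : (B.map (Complex.ofReal ·)) *ᵥ v = (ρ : ℂ) • v := by
      rw [← hmap]
      rw [hv]
      congr 1
      rw [← hrN]
      norm_cast
    set i₀ := Classical.arbitrary n
    have hwi₀ : ((w i₀ : ℂ)) ≠ 0 := by
      exact_mod_cast (hw i₀).ne'
    set c : ℂ := v i₀ / (w i₀ : ℂ) with hc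
    set wc : n → ℂ := fun i => (w i : ℂ) with hwc
    have hwceig : (B.map (Complex.ofReal ·)) *ᵥ wc = (ρ : ℂ) • wc := by
      funext i
      have h1 : ((B.map (Complex.ofReal ·)) *ᵥ wc) i = ∑ j, (B i j : ℂ) * (w j : ℂ) := by
        simp [Matrix.mulVec, dotProduct, Matrix.map_apply, hwc]
      have h2 : (B *ᵥ w) i = ρ * w i := by
        rw [heig]; rfl
      have h3 : ∑ j, (B i j : ℂ) * (w j : ℂ) = ((B *ᵥ w) i : ℂ) := by
        simp [Matrix.mulVec, dotProduct]
      rw [h1, h3, h2]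
      push_cast
      rfl
    have heig' : (B.map (Complex.ofReal ·)) *ᵥ (v - c • wc) = (ρ : ℂ) • (v - c • wc) := by
      rw [Matrix.mulVec_sub, Matrix.mulVec_smul, hv', hwceig, smul_sub, smul_comm]
    have hzero : (v - c • wc) i₀ = 0 := by
      simp only [Pi.sub_apply, Pi.smul_apply, smul_eq_mul, hc, hwc]
      rw [div_mul_cancel₀ _ hwi₀, sub_self]
    have := huniq _ heig' ⟨i₀, hzero⟩
    exact ⟨c, by rwa [sub_eq_zero] at this⟩
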